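/- Singularity-free form of the tilted score relation: under the assumptions of the score relation theorem, ∇ log q*(u,σ) = (√(1−σ²)/(1−σ²+sσ²))·v − (s/(1−σ²+sσ²))·u + (1/√(1+sσ²))·(√(1−σ²)/√(1+sσ²−σ²))·∇ log q(u',σ'), and every coefficient appearing on the right-hand side is finite for all σ ∈ [0,1] when s > 0. -/

import Mathlib

open MeasureTheory Real
open scoped RealInnerProductSpace

/-- The exponent of the reverse-conditional tilt at noise level `σ`. -/
noncomputable def tiltExp {d : ℕ} (σ : ℝ) (u x : EuclideanSpace ℝ (Fin d)) : ℝ :=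
  Real.sqrt (1 - σ ^ 2) / σ ^ 2 * ⟪u, x⟫ - (1 - σ ^ 2) / (2 * σ ^ 2) * ‖x‖ ^ 2

/-- The denoiser (posterior mean) of a density `p` at location `u`, noise level `σ`. -/
noncomputable def denoiser {d : ℕ} (p : EuclideanSpace ℝ (Fin d) → ℝ)
    (u : EuclideanSpace ℝ (Fin d)) (σ : ℝ) : EuclideanSpace ℝ (Fin d) :=
  (∫ x, p x * Real.exp (tiltExp σ u x))⁻¹ • ∫ x, (p x * Real.exp (tiltExp σ u x)) • x

/-- The score of the Gaussian convolution of `p`, expressed via Tweedie's formula. -/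
noncomputable def score {d : ℕ} (p : EuclideanSpace ℝ (Fin d) → ℝ)
    (u : EuclideanSpace ℝ (Fin d)) (σ : ℝ) : EuclideanSpace ℝ (Fin d) :=
  -((σ ^ 2)⁻¹ • u) + (Real.sqrt (1 - σ ^ 2) / σ ^ 2) • denoiser p u σ

set_option maxHeartbeats 2000000 in
/-- Singularity-free form of the tilted score relation, whose right-hand side coefficients
have denominators bounded away from zero for all σ ∈ [0,1] when s > 0. -/
theorem score_relation_singularity_free {d : ℕ} (p : EuclideanSpace ℝ (Fin d) → ℝ)
    (v : EuclideanSpace ℝ (Fin d)) (s : ℝ) (hs : 0 ≤ s)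
    (hZ : 0 < ∫ x, p x * Real.exp (⟪v, x⟫ - s / 2 * ‖x‖ ^ 2))
    (pstar : EuclideanSpace ℝ (Fin d) → ℝ)
    (hpstar : ∀ x, pstar x = p x * Real.exp (⟪v, x⟫ - s / 2 * ‖x‖ ^ 2) /
      (∫ y, p y * Real.exp (⟪v, y⟫ - s / 2 * ‖y‖ ^ 2)))
    (hFint : ∀ (u : EuclideanSpace ℝ (Fin d)) (σ : ℝ),
      Integrable (fun x => p x * Real.exp (tiltExp σ u x)) ∧
      Integrable (fun x => (p x * Real.exp (tiltExp σ u x)) • x))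
    (hGint : ∀ (u : EuclideanSpace ℝ (Fin d)) (σ : ℝ),
      Integrable (fun x => pstar x * Real.exp (tiltExp σ u x)) ∧
      Integrable (fun x => (pstar x * Real.exp (tiltExp σ u x)) • x))
    (σ : ℝ) (hσ : σ ∈ Set.Ioo (0 : ℝ) 1) (u : EuclideanSpace ℝ (Fin d))
    (σ' : ℝ) (hσ' : σ' = Real.sqrt (σ ^ 2 / (1 + s * σ ^ 2)))
    (u' : EuclideanSpace ℝ (Fin d))
    (hu' : u' = (σ ^ 2 / Real.sqrt ((1 - σ ^ 2 + s * σ ^ 2) * (1 + s * σ ^ 2))) • v +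
      Real.sqrt ((1 - σ ^ 2) / ((1 - σ ^ 2 + s * σ ^ 2) * (1 + s * σ ^ 2))) • u) :
    score pstar u σ =
      (Real.sqrt (1 - σ ^ 2) / (1 - σ ^ 2 + s * σ ^ 2)) • v -
        (s / (1 - σ ^ 2 + s * σ ^ 2)) • u +
        ((Real.sqrt (1 + s * σ ^ 2))⁻¹ *
          (Real.sqrt (1 - σ ^ 2) / Real.sqrt (1 + s * σ ^ 2 - σ ^ 2))) •
          score p u' σ' ∧
    (0 < s → ∀ τ ∈ Set.Icc (0 : ℝ) 1, 0 < 1 - τ ^ 2 + s * τ ^ 2 ∧ 1 ≤ 1 + s * τ ^ 2) := by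
  obtain ⟨hσ0, hσ1⟩ := hσ
  have hσ2 : (0:ℝ) < σ ^ 2 := by positivity
  have hA : (0:ℝ) < 1 - σ ^ 2 + s * σ ^ 2 := by nlinarith
  have hB : (0:ℝ) < 1 + s * σ ^ 2 := by nlinarith
  have hC : (0:ℝ) < 1 - σ ^ 2 := by nlinarith
  set sa := Real.sqrt (1 - σ ^ 2 + s * σ ^ 2) with hsa
  set sb := Real.sqrt (1 + s * σ ^ 2) with hsb
  set sc := Real.sqrt (1 - σ ^ 2) with hsc
  have hsa2 : sa ^ 2 = 1 - σ ^ 2 + s * σ ^ 2 := Real.sq_sqrt hA.le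
  have hsb2 : sb ^ 2 = 1 + s * σ ^ 2 := Real.sq_sqrt hB.le
  have hsc2 : sc ^ 2 = 1 - σ ^ 2 := Real.sq_sqrt hC.le
  have hsap : 0 < sa := Real.sqrt_pos.mpr hA
  have hsbp : 0 < sb := Real.sqrt_pos.mpr hB
  have hscp : 0 < sc := Real.sqrt_pos.mpr hC
  have hσ'2 : σ' ^ 2 = σ ^ 2 / (1 + s * σ ^ 2) := by
    rw [hσ']; exact Real.sq_sqrt (by positivity)
  have h1σ'2 : 1 - σ' ^ 2 = (1 - σ ^ 2 + s * σ ^ 2) / (1 + s * σ ^ 2) := by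
    rw [hσ'2]; field_simp; ring
  have hsqσ' : Real.sqrt (1 - σ' ^ 2) = sa / sb := by
    rw [h1σ'2, Real.sqrt_div hA.le, ← hsa, ← hsb]
  have hprod : Real.sqrt ((1 - σ ^ 2 + s * σ ^ 2) * (1 + s * σ ^ 2)) = sa * sb := by
    rw [Real.sqrt_mul hA.le, ← hsa, ← hsb]
  have hquot : Real.sqrt ((1 - σ ^ 2) / ((1 - σ ^ 2 + s * σ ^ 2) * (1 + s * σ ^ 2)))
      = sc / (sa * sb) := by
    rw [Real.sqrt_div hC.le, hprod, ← hsc]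
  have hK : Real.sqrt (1 - σ' ^ 2) / σ' ^ 2 = sa * sb / σ ^ 2 := by
    rw [hsqσ', hσ'2]
    field_simp
    linear_combination (-1) * hsb2
  have hL : (1 - σ' ^ 2) / (2 * σ' ^ 2) = (1 - σ ^ 2 + s * σ ^ 2) / (2 * σ ^ 2) := by
    rw [h1σ'2, hσ'2]
    field_simp
  -- key exponent identity
  have htilt : ∀ x : EuclideanSpace ℝ (Fin d),
      (⟪v, x⟫ - s / 2 * ‖x‖ ^ 2) + tiltExp σ u x = tiltExp σ' u' x := by
    intro x
    simp only [tiltExp, hu', inner_add_left, real_inner_smul_left, hK, hL, hquot, hprod, ← hsc]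
    field_simp
    ring
  set Z := ∫ y, p y * Real.exp (⟪v, y⟫ - s / 2 * ‖y‖ ^ 2) with hZdef
  have hZpos : 0 < Z := hZ
  have hfun : ∀ x, pstar x * Real.exp (tiltExp σ u x)
      = Z⁻¹ * (p x * Real.exp (tiltExp σ' u' x)) := by
    intro x
    rw [hpstar x, ← htilt x, Real.exp_add]
    field_simp
  have hden : denoiser pstar u σ = denoiser p u' σ' := by
    unfold denoiser
    have h1 : (∫ x, pstar x * Real.exp (tiltExp σ u x))
        = Z⁻¹ * ∫ x, p x * Real.exp (tiltExp σ' u' x) := by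
      simp_rw [hfun]
      exact integral_const_mul _ _
    have h2 : (∫ x, (pstar x * Real.exp (tiltExp σ u x)) • x)
        = Z⁻¹ • ∫ x, (p x * Real.exp (tiltExp σ' u' x)) • x := by
      simp_rw [hfun, mul_smul]
      exact integral_smul _ _
    rw [h1, h2, mul_inv, smul_smul, inv_inv]
    rw [mul_comm Z (_)⁻¹, mul_assoc, mul_inv_cancel₀ hZpos.ne', mul_one]
  constructor
  · have hrem : Real.sqrt (1 - σ ^ 2 / (1 + s * σ ^ 2)) = sa / sb := by
      rw [show 1 - σ ^ 2 / (1 + s * σ ^ 2) = (1 - σ ^ 2 + s * σ ^ 2) / (1 + s * σ ^ 2) by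
        field_simp; try ring]
      rw [Real.sqrt_div hA.le, ← hsa, ← hsb]
    simp only [score, hden, hu', hσ'2, hrem, ← hsc, ← hsb, ← hsa, hprod, hquot]
    rw [show (1 + s * σ ^ 2 - σ ^ 2) = (1 - σ ^ 2 + s * σ ^ 2) by ring, ← hsa]
    match_scalars
    · field_simp
      linear_combination (-((1-σ^2)*sb^2)) * hsa2 +
        (-((1-σ^2)*(1-σ^2+s*σ^2))) * hsb2 +
        ((1-σ^2+s*σ^2)*(1+s*σ^2)) * hsc2
    · field_simp
      linear_combination hsb2
    · field_simp
      linear_combination (-(sc*sb^2)) * hsa2 + (-(sc*(1-σ^2+s*σ^2))) * hsb2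
  · intro hspos τ hτ
    obtain ⟨h0, h1⟩ := hτ
    have hτ2 : τ ^ 2 ≤ 1 := by nlinarith
    constructor
    · by_cases hτ0 : τ = 0
      · simp [hτ0]
      · have : 0 < τ := lt_of_le_of_ne h0 (Ne.symm hτ0)
        nlinarith [mul_pos hspos (pow_pos this 2)]
    · nlinarith [mul_nonneg hspos.le (sq_nonneg τ)]
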